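/- arXiv:1105.1033 — 2 statements merged into one kernel-verified Lean document; each statement's English description precedes it below -/
import Mathlib

section
/- Any finite tree metric on the set of leaves of a tree with ℓ leaves embeds isometrically, after taking square roots of distances, into ℝ^ℓ: there exist points x_1, ..., x_ℓ ∈ ℝ^ℓ such that ‖x_i - x_j‖² equals the tree distance d_T(i, j) between leaves i and j. -/
open SimpleGraph
open scoped RealInnerProductSpace
open scoped Matrix
open scoped MatrixOrder

set_option maxHeartbeats 1000000

section Aux

variable {V : Type*} {G : SimpleGraph V}

private lemma tme_concat_isPath {u v w : V} {p : G.Walk u v} (hp : p.IsPath)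
    (hw : w ∉ p.support) (h : G.Adj v w) : (p.concat h).IsPath := by
  have h1 : (SimpleGraph.Walk.cons h.symm p.reverse).IsPath :=
    hp.reverse.cons (by simpa [SimpleGraph.Walk.support_reverse] using hw)
  rw [← SimpleGraph.Walk.isPath_reverse_iff, SimpleGraph.Walk.reverse_concat]
  exact h1

/-- The root-path membership flip lemma: for adjacent `u`, `w`, the edge sets of the
unique paths from `r` differ exactly in `s(u, w)`. -/
private lemma tme_adj_mem [DecidableEq V] (hG : G.IsTree) (r : V)
    (P : ∀ v : V, G.Walk r v) (hP : ∀ v, (P v).IsPath)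
    {u w : V} (h : G.Adj u w) (e : Sym2 V) :
    (¬ (e ∈ (P u).edges ↔ e ∈ (P w).edges)) ↔ e = s(u, w) := by
  -- structural dichotomy
  have key : ((P w).edges = (P u).edges ++ [s(u, w)] ∧ s(u, w) ∉ (P u).edges) ∨
      ((P u).edges = (P w).edges ++ [s(u, w)] ∧ s(u, w) ∉ (P w).edges) := by
    by_cases hw : w ∈ (P u).support
    · right
      have hdrop : ((P u).dropUntil w hw).IsPath := (hP u).dropUntil hw
      have htake : ((P u).takeUntil w hw).IsPath := (hP u).takeUntil hw
      have hPw : P w = (P u).takeUntil w hw :=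
        ((hG.existsUnique_path r w).unique (hP w) htake)
      have hsingle : ((SimpleGraph.Walk.cons h.symm SimpleGraph.Walk.nil) :
          G.Walk w u).IsPath := by
        simp [SimpleGraph.Walk.cons_isPath_iff, h.ne']
      have hdu : (P u).dropUntil w hw =
          (SimpleGraph.Walk.cons h.symm SimpleGraph.Walk.nil) :=
        (hG.existsUnique_path w u).unique hdrop hsingle
      have hsplit := ((P u).take_spec hw).symm
      have hedges : (P u).edges = ((P u).takeUntil w hw).edges ++ [s(w, u)] := by
        conv_lhs => rw [hsplit]
        rw [SimpleGraph.Walk.edges_append, hdu]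
        simp
      have hed : (P u).edges = (P w).edges ++ [s(u, w)] := by
        rw [hPw, Sym2.eq_swap]; exact hedges
      refine ⟨hed, fun hmem => ?_⟩
      have hnd : (P u).edges.Nodup := (hP u).isTrail.edges_nodup
      rw [hed] at hnd
      rw [← hPw] at hedges
      have := (List.nodup_append.mp hnd).2.2
      exact this _ hmem _ (by simp) rfl
    · left
      have hcat : (((P u).concat h)).IsPath := tme_concat_isPath (hP u) hw h
      have hPw : P w = (P u).concat h :=
        (hG.existsUnique_path r w).unique (hP w) hcat
      refine ⟨by rw [hPw, SimpleGraph.Walk.edges_concat]; simp, fun hmem => ?_⟩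
      exact hw ((P u).snd_mem_support_of_mem_edges hmem)
  rcases key with ⟨hed, hnm⟩ | ⟨hed, hnm⟩ <;>
    · rw [hed] at *
      simp only [List.mem_append, List.mem_singleton] at *
      constructor
      · intro hne
        by_contra hne'
        exact hne (by tauto)
      · intro he
        subst he
        tauto

private lemma tme_mem_path_iff [DecidableEq V] (hG : G.IsTree) (r : V)
    (P : ∀ v : V, G.Walk r v) (hP : ∀ v, (P v).IsPath) :
    ∀ {u v : V} (p : G.Walk u v), p.IsPath → ∀ e : Sym2 V,
      (e ∈ p.edges ↔ ¬ (e ∈ (P u).edges ↔ e ∈ (P v).edges)) := by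
  intro u v p
  induction p with
  | nil => intro _ e; simp
  | @cons u w v h q ih =>
    intro hp e
    have hq : q.IsPath := hp.of_cons
    have h1 := ih hq e
    have h2 := tme_adj_mem hG r P hP h e
    have hnd : s(u, w) ∉ q.edges := by
      have := hp.isTrail.edges_nodup
      rw [SimpleGraph.Walk.edges_cons, List.nodup_cons] at this
      exact this.1
    have hexcl : ¬ (e = s(u, w) ∧ e ∈ q.edges) := by
      rintro ⟨rfl, hmem⟩; exact hnd hmem
    rw [SimpleGraph.Walk.edges_cons, List.mem_cons, h1, ← h2]
    by_cases A : e ∈ (P u).edges <;> by_cases B : e ∈ (P w).edges <;>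
      by_cases C : e ∈ (P v).edges <;> by_cases D : e ∈ q.edges <;> tauto

end Aux

/-- Any tree metric on the `ℓ` leaves of a tree embeds into `ℝ^ℓ` with squared
Euclidean distance equal to the tree distance. -/
theorem tree_metric_embeds {V : Type*} [Fintype V] [DecidableEq V]
    (G : SimpleGraph V) [DecidableRel G.Adj] (hG : G.IsTree)
    (weight : Sym2 V → ℝ) (hweight : ∀ e, 0 ≤ weight e)
    (dT : V → V → ℝ)
    (hdT : ∀ u v : V, ∀ p : G.Walk u v, p.IsPath → dT u v = (p.edges.map weight).sum)
    (ℓ : ℕ) (hℓ : Fintype.card {v : V // G.degree v = 1} = ℓ) :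
    ∃ x : {v : V // G.degree v = 1} → EuclideanSpace ℝ (Fin ℓ),
      ∀ i j, ‖x i - x j‖ ^ 2 = dT i.1 j.1 := by
  classical
  set L := {v : V // G.degree v = 1}
  by_cases hLne : Nonempty L
  swap
  · refine ⟨fun i => (hLne ⟨i⟩).elim, fun i => (hLne ⟨i⟩).elim⟩
  -- root and unique paths
  have hne : Nonempty V := hG.isConnected.nonempty
  obtain ⟨r⟩ := hne
  choose P hP _hPu using fun v => hG.existsUnique_path r v
  -- embedding into edge space
  set y : V → EuclideanSpace ℝ (Sym2 V) :=
    fun v => WithLp.toLp 2 (fun e => if e ∈ (P v).edges then Real.sqrt (weight e) else 0)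
  have hkey : ∀ u v : V, ⟪y u - y v, y u - y v⟫ = dT u v := by
    intro u v
    obtain ⟨p, hp, -⟩ := hG.existsUnique_path u v
    have hmem := tme_mem_path_iff hG r P hP p hp
    rw [hdT u v p hp]
    have hterm : ∀ e : Sym2 V,
        ((y u - y v) e) * ((y u - y v) e) = if e ∈ p.edges then weight e else 0 := by
      intro e
      have hsub : (y u - y v) e = y u e - y v e := rfl
      rw [hsub]
      by_cases hme : e ∈ p.edges
      · have hne' : ¬ (e ∈ (P u).edges ↔ e ∈ (P v).edges) := (hmem e).mp hme
        simp only [y, if_pos hme]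
        by_cases hA : e ∈ (P u).edges <;> by_cases hB : e ∈ (P v).edges <;>
          simp_all [Real.mul_self_sqrt (hweight e)]
      · have heq : (e ∈ (P u).edges ↔ e ∈ (P v).edges) := by
          by_contra hcon
          exact hme ((hmem e).mpr hcon)
        simp only [y, if_neg hme]
        by_cases hA : e ∈ (P u).edges <;> by_cases hB : e ∈ (P v).edges <;>
          simp_all
    have hinner : ⟪y u - y v, y u - y v⟫ =
        ∑ e : Sym2 V, ((y u - y v) e) * ((y u - y v) e) := by
      simp only [PiLp.inner_apply, RCLike.inner_apply, mul_comm, conj_trivial]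
    rw [hinner]
    calc ∑ e : Sym2 V, ((y u - y v) e) * ((y u - y v) e)
        = ∑ e : Sym2 V, if e ∈ p.edges then weight e else 0 := by
          exact Finset.sum_congr rfl fun e _ => hterm e
      _ = ∑ e ∈ p.edges.toFinset, weight e := by
          rw [← Finset.sum_filter]
          congr 1
          ext e
          simp
      _ = (p.edges.map weight).sum := List.sum_toFinset _ hp.isTrail.edges_nodup
  -- now the Gram matrix trick to reduce the dimension to ℓ
  obtain ⟨i0⟩ := hLne
  set z : L → EuclideanSpace ℝ (Sym2 V) := fun i => y i.1 - y i0.1 with hz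
  have hzd : ∀ i j : L, ⟪z i - z j, z i - z j⟫ = dT i.1 j.1 := by
    intro i j
    have : z i - z j = y i.1 - y j.1 := by rw [hz]; exact sub_sub_sub_cancel_right _ _ _
    rw [this]
    exact hkey i.1 j.1
  have e0 : L ≃ Fin ℓ := Fintype.equivFinOfCardEq hℓ
  set A : Matrix (Fin ℓ) (Sym2 V) ℝ := fun a e => z (e0.symm a) e with hA
  have hB : (A * Aᴴ).PosSemidef := Matrix.posSemidef_self_mul_conjTranspose A
  set S : Matrix (Fin ℓ) (Fin ℓ) ℝ := CFC.sqrt (A * Aᴴ) with hS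
  have hherm : Sᴴ = S := (Matrix.nonneg_iff_posSemidef.mp (CFC.sqrt_nonneg _)).1
  have hSsym : ∀ a b, S a b = S b a := by
    intro a b
    conv_lhs => rw [← hherm]
    simp [Matrix.conjTranspose_apply]
  have hSS : S * S = A * Aᴴ := CFC.sqrt_mul_sqrt_self _ (Matrix.nonneg_iff_posSemidef.mpr hB)
  refine ⟨fun i => WithLp.toLp 2 (fun k => S (e0 i) k), fun i j => ?_⟩
  set x : L → EuclideanSpace ℝ (Fin ℓ) := fun i => WithLp.toLp 2 (fun k => S (e0 i) k) with hx
  show ‖x i - x j‖ ^ 2 = dT i.1 j.1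
  have hxin : ∀ a b : L, ⟪x a, x b⟫ = ⟪z a, z b⟫ := by
    intro a b
    have h1 : ⟪x a, x b⟫ = ∑ k, S (e0 a) k * S (e0 b) k := by
      simp [hx, PiLp.inner_apply, RCLike.inner_apply, mul_comm]
    have h2 : ∑ k, S (e0 a) k * S (e0 b) k = (S * S) (e0 a) (e0 b) := by
      rw [Matrix.mul_apply]
      exact Finset.sum_congr rfl fun k _ => by rw [hSsym (e0 b) k]
    have h3 : (A * Aᴴ) (e0 a) (e0 b) = ⟪z a, z b⟫ := by
      rw [Matrix.mul_apply]
      simp [hA, Matrix.conjTranspose_apply, PiLp.inner_apply, RCLike.inner_apply,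
        mul_comm]
      exact Finset.sum_congr rfl fun k _ => by show _ * star ((z (e0.symm (e0 b))) k) = _; simp
    rw [h1, h2, hSS, h3]
  have hnorm : ‖x i - x j‖ ^ 2 = ⟪x i - x j, x i - x j⟫ :=
    (real_inner_self_eq_norm_sq _).symm
  rw [hnorm, inner_sub_sub_self, hxin i i, hxin i j, hxin j i, hxin j j,
    ← inner_sub_sub_self]
  exact hzd i j
end

section
/- In the setting of relative regression, with ∇_t the gradient of the log loss at w_t on example (x_t, x_t', y_t) where Pr[y_t = 1] = p_t(w*), one has E[∇_t · w*] (expectation over y_t) equal to the negative quantity -Z_t (p_t(w*) - p_t(w_t))² where Z_t = ((w_t·x_t + w_t·x_t')(w*·x_t + w*·x_t'))/((w_t·x_t)(w_t·x_t')); equivalently E[∇_t·(w_t - w*)] = Z_t (p_t(w*) - p_t(w_t))² ≥ 0. -/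
open scoped RealInnerProductSpace

/-- Expected gradient inner product: `E[∇_t · w*] = -Z_t (p_t(w*) - p_t(w_t))²`, and
equivalently `E[∇_t · (w_t - w*)] = Z_t (p_t(w*) - p_t(w_t))² ≥ 0`. -/
theorem expected_grad_inner {d : ℕ}
    (x x' wt wstar : EuclideanSpace ℝ (Fin d))
    (hwx : 0 < ⟪wt, x⟫) (hwx' : 0 < ⟪wt, x'⟫)
    (hwsx : 0 < ⟪wstar, x⟫) (hwsx' : 0 < ⟪wstar, x'⟫)
    (p pstar : ℝ)
    (hp : p = ⟪wt, x⟫ / (⟪wt, x⟫ + ⟪wt, x'⟫))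
    (hpstar : pstar = ⟪wstar, x⟫ / (⟪wstar, x⟫ + ⟪wstar, x'⟫))
    (g : Bool → EuclideanSpace ℝ (Fin d))
    (hg : ∀ y, g y = (⟪wt, x⟫ + ⟪wt, x'⟫)⁻¹ • (x + x') -
        (if y then (⟪wt, x⟫)⁻¹ • x else (⟪wt, x'⟫)⁻¹ • x'))
    (Z : ℝ)
    (hZ : Z = (⟪wt, x⟫ + ⟪wt, x'⟫) * (⟪wstar, x⟫ + ⟪wstar, x'⟫) /
        (⟪wt, x⟫ * ⟪wt, x'⟫)) :
    pstar * ⟪g true, wstar⟫ + (1 - pstar) * ⟪g false, wstar⟫ =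
        -(Z * (pstar - p) ^ 2) ∧
    pstar * ⟪g true, wt - wstar⟫ + (1 - pstar) * ⟪g false, wt - wstar⟫ =
        Z * (pstar - p) ^ 2 ∧
    0 ≤ Z * (pstar - p) ^ 2 := by
  set a := ⟪wt, x⟫ with ha
  set b := ⟪wt, x'⟫ with hb
  set c := ⟪wstar, x⟫ with hc
  set e := ⟪wstar, x'⟫ with he
  have hab : 0 < a + b := by linarith
  have hce : 0 < c + e := by linarith
  have hsym1 : ⟪x, wt⟫ = a := (real_inner_comm x wt).symm
  have hsym2 : ⟪x', wt⟫ = b := (real_inner_comm x' wt).symm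
  have hsym3 : ⟪x, wstar⟫ = c := (real_inner_comm x wstar).symm
  have hsym4 : ⟪x', wstar⟫ = e := (real_inner_comm x' wstar).symm
  have hgt : ∀ y : Bool, ⟪g y, wstar⟫ =
      (a + b)⁻¹ * (c + e) - (if y then a⁻¹ * c else b⁻¹ * e) := by
    intro y
    rw [hg y]
    cases y <;>
      simp only [Bool.false_eq_true, if_true, if_false, inner_sub_left,
        inner_add_left, real_inner_smul_left, hsym3, hsym4, mul_add]
  have hgw : ∀ y : Bool, ⟪g y, wt⟫ = 0 := by
    intro y
    rw [hg y]
    cases y <;>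
      simp only [Bool.false_eq_true, if_true, if_false, inner_sub_left,
        inner_add_left, real_inner_smul_left, hsym1, hsym2, mul_add] <;>
      field_simp <;> simp
  have key : pstar * ⟪g true, wstar⟫ + (1 - pstar) * ⟪g false, wstar⟫ =
      -(Z * (pstar - p) ^ 2) := by
    rw [hgt true, hgt false, hp, hpstar, hZ]
    simp only [Bool.false_eq_true, if_true, if_false]
    field_simp
    ring
  refine ⟨key, ?_, ?_⟩
  · have : ∀ y : Bool, ⟪g y, wt - wstar⟫ = -⟪g y, wstar⟫ := by
      intro y; rw [inner_sub_right, hgw y]; ring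
    rw [this true, this false]; linarith [key]
  · have hZpos : 0 < Z := by
      rw [hZ]; positivity
    positivity
end
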